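/- Let F be a field equipped with an action θ : Θ → Aut(F) of a finite group Θ, such that the order of ker(θ) is invertible in F (coprime to the characteristic exponent). Let V be an F-vector space with a Θ-action that is semilinear with respect to θ. Then H^j(Θ, V) = 0 for all j ≥ 1. -/

import Mathlib

private lemma aux_contractNth_zero_cons {n : ℕ} {α : Type*} (op : α → α → α) (x : α)
    (g : Fin (n + 1) → α) :
    Fin.contractNth 0 op (Fin.cons x g) = Fin.cons (op x (g 0)) (fun i => g i.succ) := by
  funext k
  induction k using Fin.cases with
  | zero =>
      rw [Fin.contractNth_apply_of_eq _ _ _ _ (by simp)]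
      rw [Fin.castSucc_zero, Fin.cons_zero, Fin.cons_succ, Fin.cons_zero]
  | succ k =>
      rw [Fin.contractNth_apply_of_gt _ _ _ _ (by simp), Fin.cons_succ, Fin.cons_succ]

private lemma aux_contractNth_succ_cons {n : ℕ} {α : Type*} (op : α → α → α) (x : α)
    (g : Fin (n + 1) → α) (j : Fin (n + 1)) :
    Fin.contractNth j.succ op (Fin.cons x g) = Fin.cons x (Fin.contractNth j op g) := by
  funext k
  induction k using Fin.cases with
  | zero =>
      rw [Fin.contractNth_apply_of_lt _ _ _ _ (by simp), Fin.castSucc_zero, Fin.cons_zero,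
        Fin.cons_zero]
  | succ k =>
      rw [Fin.cons_succ]
      rcases lt_trichotomy (k : ℕ) (j : ℕ) with hlt | heq | hgt
      · rw [Fin.contractNth_apply_of_lt _ _ _ _ (by simpa using hlt),
          Fin.contractNth_apply_of_lt _ _ _ _ hlt, Fin.castSucc_fin_succ, Fin.cons_succ]
      · rw [Fin.contractNth_apply_of_eq _ _ _ _ (by simpa using heq),
          Fin.contractNth_apply_of_eq _ _ _ _ heq, Fin.castSucc_fin_succ, Fin.cons_succ,
          Fin.cons_succ]
      · rw [Fin.contractNth_apply_of_gt _ _ _ _ (by simpa using hgt),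
          Fin.contractNth_apply_of_gt _ _ _ _ hgt, Fin.cons_succ]

private lemma aux_exists_trace_one (Θ : Type) [Group Θ] [Fintype Θ]
    (F : Type) [Field F] [MulSemiringAction Θ F]
    (hker : (Nat.card {σ : Θ // ∀ x : F, σ • x = x} : F) ≠ 0) :
    ∃ a : F, ∑ σ : Θ, σ • a = 1 := by
  classical
  obtain ⟨b, hb⟩ : ∃ b : F, ∑ σ : Θ, σ • b ≠ 0 := by
    by_contra h0
    push_neg at h0
    set m : Θ → (F →* F) := fun σ => (MulSemiringAction.toRingHom Θ F σ).toMonoidHom with hm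
    have hsum : ∑ ψ ∈ Finset.univ.image m,
        ((Finset.univ.filter fun σ => m σ = ψ).card) • (⇑ψ : F → F) = 0 := by
      rw [← Finset.sum_comp (fun ψ : F →* F => (⇑ψ : F → F)) m]
      funext x
      simpa [Finset.sum_apply, hm] using h0 x
    have hcard : ∀ ψ ∈ Finset.univ.image m,
        ((Finset.univ.filter fun σ => m σ = ψ).card)
          = Nat.card {σ : Θ // ∀ x : F, σ • x = x} := by
      rintro ψ hψ
      obtain ⟨σ₀, -, rfl⟩ := Finset.mem_image.1 hψ
      rw [Nat.card_eq_fintype_card, Fintype.card_subtype]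
      refine Finset.card_nbij' (fun σ => σ₀⁻¹ * σ) (fun ν => σ₀ * ν) ?_ ?_ ?_ ?_
      · intro σ hσ
        simp only [Finset.mem_coe, Finset.mem_filter, Finset.mem_univ, true_and] at hσ ⊢
        intro x
        have hx := DFunLike.congr_fun hσ x
        simp only [hm, RingHom.toMonoidHom_eq_coe, MonoidHom.coe_coe,
          MulSemiringAction.toRingHom_apply] at hx
        calc (σ₀⁻¹ * σ) • x = σ₀⁻¹ • σ • x := mul_smul _ _ _
          _ = σ₀⁻¹ • σ₀ • x := by rw [hx]
          _ = x := inv_smul_smul _ _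
      · intro ν hν
        simp only [Finset.mem_coe, Finset.mem_filter, Finset.mem_univ, true_and] at hν ⊢
        ext x
        simp only [hm, RingHom.toMonoidHom_eq_coe, MonoidHom.coe_coe,
          MulSemiringAction.toRingHom_apply, mul_smul, hν x]
      · intro σ _; simp
      · intro ν _; simp
    rw [Finset.sum_congr rfl fun ψ hψ => by rw [hcard ψ hψ]] at hsum
    simp_rw [← Nat.cast_smul_eq_nsmul F] at hsum
    have := linearIndependent_iff'.1 (linearIndependent_monoidHom F F)
      (Finset.univ.image m) (fun _ => (Nat.card {σ : Θ // ∀ x : F, σ • x = x} : F)) hsum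
      (m 1) (Finset.mem_image_of_mem _ (Finset.mem_univ 1))
    exact hker this
  set S : F := ∑ σ : Θ, σ • b with hS
  have hfix : ∀ τ : Θ, τ • S = S := by
    intro τ
    rw [hS, Finset.smul_sum]
    refine Fintype.sum_equiv (Equiv.mulLeft τ) _ _ fun σ => ?_
    simp [mul_smul]
  refine ⟨S⁻¹ * b, ?_⟩
  have : ∀ σ : Θ, σ • (S⁻¹ * b) = S⁻¹ * (σ • b) := by
    intro σ
    rw [smul_mul', smul_inv'', hfix]
  rw [Finset.sum_congr rfl fun σ _ => this σ, ← Finset.mul_sum, ← hS, inv_mul_cancel₀ hb]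

theorem stmt12 (Θ : Type) [Group Θ] [Finite Θ]
    (F : Type) [Field F] [MulSemiringAction Θ F]
    (V : Type) [AddCommGroup V] [Module F V] [DistribMulAction Θ V]
    -- the action of `Θ` on `V` is semilinear with respect to the action on `F`
    (hsemi : ∀ (σ : Θ) (c : F) (v : V), σ • (c • v) = (σ • c) • (σ • v))
    -- the order of the kernel of `θ : Θ → Aut F` is invertible in `F`
    (hker : (Nat.card {σ : Θ // ∀ x : F, σ • x = x} : F) ≠ 0)
    -- the underlying `ℤ`-linear representation of `Θ` on `V`
    (ρ : Representation ℤ Θ V) (hρ : ∀ (σ : Θ) (v : V), ρ σ v = σ • v)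
    (j : ℕ) (hj : 1 ≤ j) :
    CategoryTheory.Limits.IsZero (groupCohomology (Rep.of ρ) j) := by
  classical
  cases nonempty_fintype Θ
  obtain ⟨a, ha⟩ := aux_exists_trace_one Θ F hker
  obtain ⟨n, rfl⟩ : ∃ n, j = n + 1 := ⟨j - 1, (Nat.succ_pred_eq_of_pos hj).symm⟩
  set A : Rep ℤ Θ := Rep.of ρ with hA
  have hsz : ∀ (σ : Θ) (z : ℤ) (v : V), σ • (z • v) = z • (σ • v) := fun σ z v => by
    rw [← hρ, ← hρ, map_smul]
  show CategoryTheory.Limits.IsZero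
    ((groupCohomology.inhomogeneousCochains A).homology (n + 1))
  rw [← HomologicalComplex.exactAt_iff_isZero_homology]
  rw [HomologicalComplex.exactAt_iff' _ n (n + 1) (n + 2)
    (ComplexShape.prev_eq' _ (by simp)) (ComplexShape.next_eq' _ (by simp))]
  rw [CategoryTheory.ShortComplex.moduleCat_exact_iff]
  intro f₀ hf₀
  obtain ⟨f, rfl⟩ : ∃ fV : (Fin (n + 1) → Θ) → V, fV = f₀ := ⟨f₀, rfl⟩
  have hf' : ∀ y : Fin (n + 2) → Θ,
      ρ (y 0) (f fun i => y i.succ)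
        + ∑ j' : Fin (n + 2), ((-1 : ℤ) ^ ((j' : ℕ) + 1)) •
            f (Fin.contractNth j' (· * ·) y) = 0 := by
    intro y
    have h1 : (groupCohomology.inhomogeneousCochains A).d (n + 1) (n + 2) f = 0 := hf₀
    rw [groupCohomology.inhomogeneousCochains.d_def] at h1
    exact congrFun h1 y
  refine ⟨fun g => ∑ σ : Θ, (σ • a) • (σ • f (Fin.cons σ⁻¹ g)), ?_⟩
  show (groupCohomology.inhomogeneousCochains A).d n (n + 1)
      (fun g => ∑ σ : Θ, (σ • a) • (σ • f (Fin.cons σ⁻¹ g))) = f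
  rw [groupCohomology.inhomogeneousCochains.d_def]
  funext g
  show ρ (g 0) (∑ σ : Θ, (σ • a) • (σ • f (Fin.cons σ⁻¹ fun i => g i.succ)))
      + ∑ j : Fin (n + 1), ((-1 : ℤ) ^ ((j : ℕ) + 1)) •
          ∑ σ : Θ, (σ • a) • (σ • f (Fin.cons σ⁻¹ (Fin.contractNth j (· * ·) g))) = f g
  -- the cocycle identity specialized at `Fin.cons σ⁻¹ g`
  have Id1 : ∀ σ : Θ, f (Fin.cons (σ⁻¹ * g 0) (fun i => g i.succ))
      = σ⁻¹ • f g + ∑ j : Fin (n + 1), ((-1 : ℤ) ^ (((j : ℕ) + 1) + 1)) •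
          f (Fin.cons σ⁻¹ (Fin.contractNth j (· * ·) g)) := by
    intro σ
    have h2 := hf' (Fin.cons σ⁻¹ g)
    rw [Fin.sum_univ_succ] at h2
    simp only [Fin.cons_zero, Fin.cons_succ, aux_contractNth_zero_cons,
      aux_contractNth_succ_cons, Fin.val_zero, zero_add, pow_one, neg_one_smul,
      Fin.val_succ] at h2
    have he : (f fun i => g i) = f g := rfl
    rw [he, hρ] at h2
    have h4 : (σ⁻¹ • f g + ∑ j : Fin (n + 1), ((-1 : ℤ) ^ (((j : ℕ) + 1) + 1)) •
          f (Fin.cons σ⁻¹ (Fin.contractNth j (· * ·) g)))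
        - f (Fin.cons (σ⁻¹ * g 0) (fun i => g i.succ)) = 0 := by
      rw [← h2]; abel
    exact (sub_eq_zero.mp h4).symm
  rw [show ρ (g 0) (∑ σ : Θ, (σ • a) • (σ • f (Fin.cons σ⁻¹ fun i => g i.succ)))
      = ∑ σ : Θ, (σ • a) • (σ • f (Fin.cons (σ⁻¹ * g 0) (fun i => g i.succ))) by
    rw [hρ, Finset.smul_sum]
    refine Fintype.sum_equiv (Equiv.mulLeft (g 0)) _ _ fun τ => ?_
    show g 0 • ((τ • a) • (τ • f (Fin.cons τ⁻¹ fun i => g i.succ))) = _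
    rw [hsemi]
    simp only [smul_smul, Equiv.coe_mulLeft]
    rw [show (g 0 * τ)⁻¹ * g 0 = τ⁻¹ by group]]
  simp only [Id1]
  have expand : ∀ σ : Θ, (σ • a) • (σ • (σ⁻¹ • f g + ∑ j : Fin (n + 1),
        ((-1 : ℤ) ^ (((j : ℕ) + 1) + 1)) • f (Fin.cons σ⁻¹ (Fin.contractNth j (· * ·) g))))
      = (σ • a) • f g + ∑ j : Fin (n + 1), ((-1 : ℤ) ^ (((j : ℕ) + 1) + 1)) •
          ((σ • a) • (σ • f (Fin.cons σ⁻¹ (Fin.contractNth j (· * ·) g)))) := by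
    intro σ
    rw [smul_add, smul_inv_smul σ (f g), smul_add, Finset.smul_sum, Finset.smul_sum]
    congr 1
    refine Finset.sum_congr rfl fun j _ => ?_
    rw [hsz, smul_comm]
  simp only [expand]
  rw [Finset.sum_add_distrib, ← Finset.sum_smul, ha, one_smul, Finset.sum_comm]
  simp only [pow_succ, mul_neg_one, neg_smul, neg_neg, Finset.smul_sum]
  simp only [Finset.sum_neg_distrib]
  abel
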